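/- For all θ > 0 and y, b > 0, the function c ↦ q_y(b,c) is a probability density on (0,∞): ∫₀^∞ q_y(b,c) dc = 1, where q_y(b,c) := (1/(2y)) (c/b)^{(θ−1)/2} exp(−(b+c)/(2y)) I_{θ−1}(√(bc)/y). -/

import Mathlib

open MeasureTheory Real

/-- The modified Bessel function of the first kind, defined by its power series
`I_ν(z) = Σ_{m ≥ 0} (z/2)^{2m+ν} / (m! · Γ(m+ν+1))`. -/
noncomputable def besselI (ν z : ℝ) : ℝ :=
  ∑' m : ℕ, (z / 2) ^ (2 * (m : ℝ) + ν) / ((m.factorial : ℝ) * Real.Gamma ((m : ℝ) + ν + 1))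

/-- The transition density `q_y(b, c)` of the `2θ`-dimensional squared Bessel process. -/
noncomputable def besqDensity (θ y b c : ℝ) : ℝ :=
  (1 / (2 * y)) * (c / b) ^ ((θ - 1) / 2) * Real.exp (-(b + c) / (2 * y)) *
    besselI (θ - 1) (Real.sqrt (b * c) / y)

/-- For `θ > 0` and `y, b > 0`, `c ↦ q_y(b, c)` is a probability density on `(0, ∞)`:
`∫₀^∞ q_y(b,c) dc = 1`. -/
private lemma besq_term_eq (θ y b c : ℝ) (hθ : 0 < θ) (hy : 0 < y) (hb : 0 < b) (hc : 0 < c)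
    (m : ℕ) :
    (1 / (2 * y)) * (c / b) ^ ((θ - 1) / 2) * Real.exp (-(b + c) / (2 * y)) *
      ((Real.sqrt (b * c) / y / 2) ^ (2 * (m : ℝ) + (θ - 1)) /
        ((m.factorial : ℝ) * Real.Gamma ((m : ℝ) + (θ - 1) + 1)))
    = (Real.exp (-(b * (2 * y)⁻¹)) * (b * (2 * y)⁻¹) ^ m / (m.factorial : ℝ) *
        ((2 * y)⁻¹ ^ ((m : ℝ) + θ) / Real.Gamma ((m : ℝ) + θ))) *
      (c ^ ((m : ℝ) + θ - 1) * Real.exp (-((2 * y)⁻¹ * c))) := by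
  have hr : (0:ℝ) < (2 * y)⁻¹ := by positivity
  set r : ℝ := (2 * y)⁻¹ with hrdef
  have h1 : Real.sqrt (b * c) / y / 2 = Real.sqrt b * Real.sqrt c * r := by
    rw [Real.sqrt_mul hb.le, div_div, hrdef, mul_comm y 2]
    ring
  have hΓarg : (m : ℝ) + (θ - 1) + 1 = (m : ℝ) + θ := by ring
  have hexp : Real.exp (-(b + c) / (2 * y)) = Real.exp (-(b * r)) * Real.exp (-(r * c)) := by
    rw [← Real.exp_add, hrdef]; congr 1; field_simp; ring
  have he : (2 * (m : ℝ) + (θ - 1)) = 2 * (m : ℝ) + θ - 1 := by ring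
  rw [h1, hΓarg, hexp, he]
  have hsb : Real.sqrt b ^ (2 * (m : ℝ) + θ - 1) = b ^ (m : ℝ) * b ^ ((θ - 1) / 2) := by
    rw [Real.sqrt_eq_rpow, ← Real.rpow_mul hb.le,
      show (1/2 : ℝ) * (2 * (m : ℝ) + θ - 1) = (m : ℝ) + (θ-1)/2 by ring,
      Real.rpow_add hb]
  have hsc : Real.sqrt c ^ (2 * (m : ℝ) + θ - 1) = c ^ (m : ℝ) * c ^ ((θ - 1) / 2) := by
    rw [Real.sqrt_eq_rpow, ← Real.rpow_mul hc.le,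
      show (1/2 : ℝ) * (2 * (m : ℝ) + θ - 1) = (m : ℝ) + (θ-1)/2 by ring,
      Real.rpow_add hc]
  have hsplit : (Real.sqrt b * Real.sqrt c * r) ^ (2 * (m : ℝ) + θ - 1)
      = b ^ (m : ℝ) * b ^ ((θ - 1) / 2) * (c ^ (m : ℝ) * c ^ ((θ - 1) / 2)) *
        r ^ (2 * (m : ℝ) + θ - 1) := by
    rw [Real.mul_rpow (by positivity) hr.le,
      Real.mul_rpow (Real.sqrt_nonneg b) (Real.sqrt_nonneg c), hsb, hsc]
  rw [hsplit]
  have hdiv : (c / b) ^ ((θ - 1) / 2) = c ^ ((θ - 1) / 2) / b ^ ((θ - 1) / 2) :=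
    Real.div_rpow hc.le hb.le _
  rw [hdiv]
  have hrr : r ^ (2 * (m : ℝ) + θ - 1) = r ^ (m : ℝ) * r ^ ((m : ℝ) + θ) * (2 * y) := by
    rw [show (2 * (m : ℝ) + θ - 1) = (m : ℝ) + ((m : ℝ) + θ) + (-1 : ℝ) by ring,
      Real.rpow_add hr, Real.rpow_add hr, Real.rpow_neg_one, hrdef, inv_inv]
  have hcc : c ^ ((m : ℝ) + θ - 1) = c ^ (m : ℝ) * c ^ ((θ - 1) / 2) * c ^ ((θ - 1) / 2) := by
    rw [← Real.rpow_add hc, ← Real.rpow_add hc]; congr 1; ring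
  have hbp : (b * r) ^ m = b ^ (m : ℝ) * r ^ (m : ℝ) := by
    rw [mul_pow, ← Real.rpow_natCast b, ← Real.rpow_natCast r]
  rw [hcc, hbp, hrr]
  have hΓ : Real.Gamma ((m : ℝ) + θ) ≠ 0 := (Real.Gamma_pos_of_pos (by positivity)).ne'
  have hfac : (m.factorial : ℝ) ≠ 0 := Nat.cast_ne_zero.mpr m.factorial_ne_zero
  have hbq : b ^ ((θ - 1) / 2) ≠ 0 := (Real.rpow_pos_of_pos hb _).ne'
  field_simp

theorem besqDensity_integral_eq_one (θ y b : ℝ) (hθ : 0 < θ) (hy : 0 < y) (hb : 0 < b) :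
    ∫ c in Set.Ioi (0 : ℝ), besqDensity θ y b c = 1 := by
  have hr : (0:ℝ) < (2 * y)⁻¹ := by positivity
  set r : ℝ := (2 * y)⁻¹ with hrdef
  set A : ℕ → ℝ := fun m =>
    Real.exp (-(b * r)) * (b * r) ^ m / (m.factorial : ℝ) *
      (r ^ ((m : ℝ) + θ) / Real.Gamma ((m : ℝ) + θ)) with hA
  set F : ℕ → ℝ → ℝ := fun m c => A m * (c ^ ((m : ℝ) + θ - 1) * Real.exp (-(r * c))) with hF
  have hA0 : ∀ m, 0 ≤ A m := by
    intro m
    have hΓ : 0 < Real.Gamma ((m : ℝ) + θ) := Real.Gamma_pos_of_pos (by positivity)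
    rw [hA]
    positivity
  -- pointwise identity
  have hpt : Set.EqOn (besqDensity θ y b) (fun c => ∑' m, F m c) (Set.Ioi (0:ℝ)) := by
    intro c hc
    have hc0 : (0:ℝ) < c := hc
    show besqDensity θ y b c = _
    unfold besqDensity besselI
    rw [← tsum_mul_left]
    exact tsum_congr fun m => besq_term_eq θ y b c hθ hy hb hc0 m
  rw [setIntegral_congr_fun measurableSet_Ioi hpt]
  -- integrability of each term
  have hg : ∀ m : ℕ, IntegrableOn
      (fun c : ℝ => c ^ ((m : ℝ) + θ - 1) * Real.exp (-(r * c))) (Set.Ioi 0) := by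
    intro m
    have := integrableOn_rpow_mul_exp_neg_mul_rpow
      (s := (m : ℝ) + θ - 1) (p := 1) (by have := Nat.cast_nonneg (α := ℝ) m; linarith) zero_lt_one hr
    simpa [Real.rpow_one, neg_mul] using this
  have hFint : ∀ m : ℕ, Integrable (F m) (volume.restrict (Set.Ioi 0)) := by
    intro m
    simpa [hF] using (hg m).const_mul (A m)
  -- value of each integral
  have hval : ∀ m : ℕ, ∫ c in Set.Ioi (0:ℝ), F m c
      = Real.exp (-(b * r)) * ((b * r) ^ m / (m.factorial : ℝ)) := by
    intro m
    have hΓ : Real.Gamma ((m : ℝ) + θ) ≠ 0 := (Real.Gamma_pos_of_pos (by positivity)).ne'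
    rw [hF]
    simp only
    rw [integral_const_mul,
      Real.integral_rpow_mul_exp_neg_mul_Ioi (by positivity : (0:ℝ) < (m : ℝ) + θ) hr, hA]
    have h1 : r ^ ((m : ℝ) + θ) * (1 / r) ^ ((m : ℝ) + θ) = 1 := by
      rw [← Real.mul_rpow hr.le (by positivity), mul_one_div_cancel hr.ne', Real.one_rpow]
    field_simp
    linear_combination h1
  -- norms
  have hnorm : ∀ m : ℕ, ∫ c in Set.Ioi (0:ℝ), ‖F m c‖ = ∫ c in Set.Ioi (0:ℝ), F m c := by
    intro m
    refine setIntegral_congr_fun measurableSet_Ioi fun c hc => ?_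
    have hc0 : (0:ℝ) < c := hc
    exact Real.norm_of_nonneg (mul_nonneg (hA0 m) (by positivity))
  have hsum : Summable fun m : ℕ => ∫ c in Set.Ioi (0:ℝ), ‖F m c‖ := by
    simp_rw [hnorm, hval]
    exact (Real.summable_pow_div_factorial (b * r)).mul_left _
  rw [← integral_tsum_of_summable_integral_norm hFint hsum, tsum_congr hval, tsum_mul_left]
  rw [show (fun m : ℕ => (b * r) ^ m / (m.factorial : ℝ)) = _ from rfl]
  have : ∑' m : ℕ, (b * r) ^ m / (m.factorial : ℝ) = Real.exp (b * r) := by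
    rw [Real.exp_eq_exp_ℝ, NormedSpace.exp_eq_tsum_div]
  rw [this, ← Real.exp_add, neg_add_cancel, Real.exp_zero]
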